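/- Let q ≥ 2 be an integer and define T_3 on appropriate points by the piecewise translations of the stated 6-IET. Then for every n with 2 ≤ n ≤ q, T_3^{2n−4}((2q^2−1)/(q^2(2q−1))) = (n q^2 − 1)/(q^2(2q−1)); in particular T_3^{2q−4}((2q^2−1)/(q^2(2q−1))) = (q^3−1)/(q^2(2q−1)), and one further application of T_3 yields 1/q^2. -/

import Mathlib

/-- The 6-interval exchange transformation `T_3` on `[0,1)` (with a gap on which the
paper's map is undefined; there we return `x` as a junk value), for the geometric
armadillo tail with parameter `1/q`. -/
noncomputable def T3 (q : ℕ) (x : ℝ) : ℝ :=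
  if x < ((q : ℝ) - 1) / (2 * q - 1) then x + (q : ℝ) / (2 * q - 1)
  else if x = ((q : ℝ) - 1) / (2 * q - 1) then 0
  else if x ≤ ((q : ℝ) ^ 2 - 1) / (q * (2 * q - 1)) then x + (2 - (q : ℝ)) / (2 * q - 1)
  else if x ≤ ((q : ℝ) ^ 3 - 1) / ((q : ℝ) ^ 2 * (2 * q - 1)) then
    x + (2 - (q : ℝ) ^ 2) / (q * (2 * q - 1))
  else if x < ((q : ℝ) ^ 4 + q - 1) / ((q : ℝ) ^ 3 * (2 * q - 1)) then x
  else if x < ((q : ℝ) ^ 3 + q - 1) / ((q : ℝ) ^ 2 * (2 * q - 1)) then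
    x + (1 - (q : ℝ) ^ 3) / ((q : ℝ) ^ 2 * (2 * q - 1))
  else if x < ((q : ℝ) ^ 2 + q - 1) / (q * (2 * q - 1)) then
    x + (1 - (q : ℝ) ^ 2) / (q * (2 * q - 1))
  else x + (1 - (q : ℝ)) / (2 * q - 1)

lemma T3_branch1 (q : ℕ) (x : ℝ) (h : x < ((q : ℝ) - 1) / (2 * q - 1)) :
    T3 q x = x + (q : ℝ) / (2 * q - 1) := by
  rw [T3, if_pos h]

lemma T3_branch_last (q : ℕ) (hq : 2 ≤ q) (x : ℝ)
    (h : ((q : ℝ) ^ 2 + q - 1) / (q * (2 * q - 1)) ≤ x) :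
    T3 q x = x + (1 - (q : ℝ)) / (2 * q - 1) := by
  have hq2 : (2 : ℝ) ≤ (q : ℝ) := by exact_mod_cast hq
  have hqpos : (0 : ℝ) < (q : ℝ) := by linarith
  have hd : (0 : ℝ) < 2 * (q : ℝ) - 1 := by linarith
  have h1 : ((q : ℝ) - 1) / (2 * q - 1) < x := by
    refine lt_of_lt_of_le ?_ h
    rw [div_lt_div_iff₀ hd (by positivity)]; nlinarith
  have h2 : ((q : ℝ) ^ 2 - 1) / (q * (2 * q - 1)) < x := by
    refine lt_of_lt_of_le ?_ h
    rw [div_lt_div_iff₀ (by positivity) (by positivity)]; nlinarith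
  have h3 : ((q : ℝ) ^ 3 - 1) / ((q : ℝ) ^ 2 * (2 * q - 1)) < x := by
    refine lt_of_lt_of_le ?_ h
    rw [div_lt_div_iff₀ (by positivity) (by positivity)]
    nlinarith [mul_pos (mul_pos hqpos hd) (show (0:ℝ) < (q:ℝ)^2 - q + 1 by nlinarith)]
  have h4 : ((q : ℝ) ^ 4 + q - 1) / ((q : ℝ) ^ 3 * (2 * q - 1)) ≤ x := by
    refine le_trans ?_ h
    rw [div_le_div_iff₀ (by positivity) (by positivity)]
    nlinarith [mul_nonneg (mul_pos hqpos hd).le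
      (show (0:ℝ) ≤ ((q:ℝ)-1)^2 * ((q:ℝ)+1) by positivity)]
  have h5 : ((q : ℝ) ^ 3 + q - 1) / ((q : ℝ) ^ 2 * (2 * q - 1)) ≤ x := by
    refine le_trans ?_ h
    rw [div_le_div_iff₀ (by positivity) (by positivity)]
    nlinarith [mul_nonneg (mul_pos hqpos hd).le (sq_nonneg ((q:ℝ)-1))]
  rw [T3, if_neg (not_lt.mpr h1.le), if_neg h1.ne', if_neg (not_le.mpr h2),
    if_neg (not_le.mpr h3), if_neg (not_lt.mpr h4), if_neg (not_lt.mpr h5),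
    if_neg (not_lt.mpr h)]

lemma T3_branch4 (q : ℕ) (hq : 2 ≤ q) (x : ℝ)
    (h2 : ((q : ℝ) ^ 2 - 1) / (q * (2 * q - 1)) < x)
    (h3 : x ≤ ((q : ℝ) ^ 3 - 1) / ((q : ℝ) ^ 2 * (2 * q - 1))) :
    T3 q x = x + (2 - (q : ℝ) ^ 2) / (q * (2 * q - 1)) := by
  have hq2 : (2 : ℝ) ≤ (q : ℝ) := by exact_mod_cast hq
  have hqpos : (0 : ℝ) < (q : ℝ) := by linarith
  have hd : (0 : ℝ) < 2 * (q : ℝ) - 1 := by linarith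
  have h1 : ((q : ℝ) - 1) / (2 * q - 1) < x := by
    refine lt_of_le_of_lt ?_ h2
    rw [div_le_div_iff₀ hd (by positivity)]; nlinarith
  rw [T3, if_neg (not_lt.mpr h1.le), if_neg h1.ne', if_neg (not_le.mpr h2), if_pos h3]

lemma T3_step (q : ℕ) (hq : 2 ≤ q) (n : ℕ) (h2 : 2 ≤ n) (hn : n < q) :
    T3 q (T3 q (((n : ℝ) * (q : ℝ) ^ 2 - 1) / ((q : ℝ) ^ 2 * (2 * q - 1)))) =
      (((n : ℝ) + 1) * (q : ℝ) ^ 2 - 1) / ((q : ℝ) ^ 2 * (2 * q - 1)) := by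
  have hq2 : (2 : ℝ) ≤ (q : ℝ) := by exact_mod_cast hq
  have hn2 : (2 : ℝ) ≤ (n : ℝ) := by exact_mod_cast h2
  have hnq : (n : ℝ) + 1 ≤ (q : ℝ) := by exact_mod_cast hn
  have hqpos : (0 : ℝ) < (q : ℝ) := by linarith
  have hd : (0 : ℝ) < 2 * (q : ℝ) - 1 := by linarith
  have hD : (0 : ℝ) < (q : ℝ) ^ 2 * (2 * (q : ℝ) - 1) := by positivity
  have e1 := T3_branch1 q (((n : ℝ) * (q : ℝ) ^ 2 - 1) / ((q : ℝ) ^ 2 * (2 * q - 1))) (by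
    rw [div_lt_div_iff₀ hD hd]
    nlinarith [mul_nonneg (mul_nonneg hd.le (show (0:ℝ) ≤ (q:ℝ) - 1 - n by linarith))
      (sq_nonneg (q:ℝ))])
  rw [e1]
  have hy : ((n : ℝ) * (q : ℝ) ^ 2 - 1) / ((q : ℝ) ^ 2 * (2 * q - 1)) + (q : ℝ) / (2 * q - 1)
      = ((n : ℝ) * (q : ℝ) ^ 2 + (q : ℝ) ^ 3 - 1) / ((q : ℝ) ^ 2 * (2 * q - 1)) := by
    field_simp; ring
  rw [hy, T3_branch_last q hq _ (by
    rw [div_le_div_iff₀ (by positivity) hD]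
    nlinarith [mul_pos (mul_pos hqpos hd)
      (show (0:ℝ) < ((n:ℝ)-1)*(q:ℝ)^2 + q - 1 by nlinarith)])]
  field_simp; ring

lemma T3_final (q : ℕ) (hq : 2 ≤ q) :
    T3 q (((q : ℝ) ^ 3 - 1) / ((q : ℝ) ^ 2 * (2 * q - 1))) = 1 / (q : ℝ) ^ 2 := by
  have hq2 : (2 : ℝ) ≤ (q : ℝ) := by exact_mod_cast hq
  have hqpos : (0 : ℝ) < (q : ℝ) := by linarith
  have hd : (0 : ℝ) < 2 * (q : ℝ) - 1 := by linarith
  rw [T3_branch4 q hq _ (by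
    rw [div_lt_div_iff₀ (by positivity) (by positivity)]
    nlinarith [mul_pos (mul_pos hqpos hd) (show (0:ℝ) < (q:ℝ) - 1 by linarith)])
    (le_refl _)]
  rw [div_add_div _ _ (mul_pos (pow_pos hqpos 2) hd).ne' (mul_pos hqpos hd).ne',
    div_eq_div_iff (mul_pos (mul_pos (pow_pos hqpos 2) hd) (mul_pos hqpos hd)).ne'
      (pow_pos hqpos 2).ne']
  ring

theorem bsc3_iet_orbit (q : ℕ) (hq : 2 ≤ q) :
    (∀ n : ℕ, 2 ≤ n → n ≤ q →
      (T3 q)^[2 * n - 4] ((2 * (q : ℝ) ^ 2 - 1) / ((q : ℝ) ^ 2 * (2 * q - 1))) =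
        ((n : ℝ) * (q : ℝ) ^ 2 - 1) / ((q : ℝ) ^ 2 * (2 * q - 1))) ∧
    (T3 q)^[2 * q - 4] ((2 * (q : ℝ) ^ 2 - 1) / ((q : ℝ) ^ 2 * (2 * q - 1))) =
      ((q : ℝ) ^ 3 - 1) / ((q : ℝ) ^ 2 * (2 * q - 1)) ∧
    T3 q (((q : ℝ) ^ 3 - 1) / ((q : ℝ) ^ 2 * (2 * q - 1))) = 1 / (q : ℝ) ^ 2 := by
  have main : ∀ n : ℕ, 2 ≤ n → n ≤ q →
      (T3 q)^[2 * n - 4] ((2 * (q : ℝ) ^ 2 - 1) / ((q : ℝ) ^ 2 * (2 * q - 1))) =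
        ((n : ℝ) * (q : ℝ) ^ 2 - 1) / ((q : ℝ) ^ 2 * (2 * q - 1)) := by
    intro n hn
    induction n, hn using Nat.le_induction with
    | base => intro _; norm_num
    | succ n hn ih =>
      intro hle
      have hnq : n < q := hle
      have h24 : 2 * (n + 1) - 4 = 2 + (2 * n - 4) := by omega
      rw [h24, Function.iterate_add_apply, ih hnq.le,
        Function.iterate_succ_apply, Function.iterate_one, T3_step q hq n hn hnq]
      push_cast; ring_nf
  refine ⟨main, ?_, T3_final q hq⟩
  have := main q hq le_rfl
  rw [this]; ring_nf
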